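/- Let H be a connected graph of order a. Then for any b ∈ ℕ, the two-color ordered Ramsey number of H versus the monotone path of order b equals 1 + (a−1)(b−1). -/

import Mathlib

open SimpleGraph Finset

/-- A symmetric `k`-edge-coloring `χ` of the complete graph on `Fin n` contains a copy of `H`
in color `j` via a strictly increasing embedding. -/
def ContainsOrd {m n k : ℕ} (H : SimpleGraph (Fin m))
    (χ : Fin n → Fin n → Fin k) (j : Fin k) : Prop :=
  ∃ φ : Fin m → Fin n, StrictMono φ ∧ ∀ u v : Fin m, H.Adj u v → χ (φ u) (φ v) = j

/-- Contains a copy via an embedding that is increasing up to a cyclic permutation. -/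
def ContainsCyc {m n k : ℕ} (H : SimpleGraph (Fin m))
    (χ : Fin n → Fin n → Fin k) (j : Fin k) : Prop :=
  ∃ φ : Fin m → Fin n, (∃ t : Fin m, StrictMono fun i : Fin m => φ (i + t)) ∧
    ∀ u v : Fin m, H.Adj u v → χ (φ u) (φ v) = j

/-- Contains a copy via an arbitrary injective embedding. -/
def ContainsStd {m n k : ℕ} (H : SimpleGraph (Fin m))
    (χ : Fin n → Fin n → Fin k) (j : Fin k) : Prop :=
  ∃ φ : Fin m → Fin n, Function.Injective φ ∧ ∀ u v : Fin m, H.Adj u v → χ (φ u) (φ v) = j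

/-- The ordered Ramsey number of a family of graphs. -/
noncomputable def Rord {k : ℕ} (m : Fin k → ℕ) (H : ∀ j, SimpleGraph (Fin (m j))) : ℕ :=
  sInf {n | ∀ χ : Fin n → Fin n → Fin k, (∀ u v, χ u v = χ v u) → ∃ j, ContainsOrd (H j) χ j}

/-- The cyclic Ramsey number of a family of graphs. -/
noncomputable def Rcyc {k : ℕ} (m : Fin k → ℕ) (H : ∀ j, SimpleGraph (Fin (m j))) : ℕ :=
  sInf {n | ∀ χ : Fin n → Fin n → Fin k, (∀ u v, χ u v = χ v u) → ∃ j, ContainsCyc (H j) χ j}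

/-- The standard Ramsey number of a family of graphs. -/
noncomputable def Rstd {k : ℕ} (m : Fin k → ℕ) (H : ∀ j, SimpleGraph (Fin (m j))) : ℕ :=
  sInf {n | ∀ χ : Fin n → Fin n → Fin k, (∀ u v, χ u v = χ v u) → ∃ j, ContainsStd (H j) χ j}

/-- The two-color ordered Ramsey number. -/
noncomputable def Rord2 {a b : ℕ} (H₁ : SimpleGraph (Fin a)) (H₂ : SimpleGraph (Fin b)) : ℕ :=
  sInf {n | ∀ χ : Fin n → Fin n → Fin 2, (∀ u v, χ u v = χ v u) →
    ContainsOrd H₁ χ 0 ∨ ContainsOrd H₂ χ 1}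

/-- The two-color cyclic Ramsey number. -/
noncomputable def Rcyc2 {a b : ℕ} (H₁ : SimpleGraph (Fin a)) (H₂ : SimpleGraph (Fin b)) : ℕ :=
  sInf {n | ∀ χ : Fin n → Fin n → Fin 2, (∀ u v, χ u v = χ v u) →
    ContainsCyc H₁ χ 0 ∨ ContainsCyc H₂ χ 1}

/-- The monotone path of order `n`. -/
def monPath (n : ℕ) : SimpleGraph (Fin n) :=
  SimpleGraph.fromRel fun u v => (u : ℕ) + 1 = (v : ℕ)

/-- The monotone cycle of order `n`. -/
def monCycle (n : ℕ) : SimpleGraph (Fin n) :=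
  SimpleGraph.fromRel fun u v => (u : ℕ) + 1 = (v : ℕ) ∨ ((u : ℕ) = 0 ∧ (v : ℕ) = n - 1)

/-- The start-central star of order `n` (center `0`). -/
def starSC (n : ℕ) : SimpleGraph (Fin n) :=
  SimpleGraph.fromRel fun u _ => (u : ℕ) = 0

/-- The star of order `n` with center `c`. -/
def starG (n : ℕ) (c : Fin n) : SimpleGraph (Fin n) :=
  SimpleGraph.fromRel fun u _ => u = c

/-- The nested matching of order `n`. -/
def nestedMatching (n : ℕ) : SimpleGraph (Fin n) :=
  SimpleGraph.fromRel fun u v => (u : ℕ) + (v : ℕ) = n - 1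

/-- Rotational isomorphism of two graphs on `Fin m`. -/
def RotIso {m : ℕ} (G₁ G₂ : SimpleGraph (Fin m)) : Prop :=
  ∃ s : Fin m, ∀ u v : Fin m, G₁.Adj u v ↔ G₂.Adj (u + s) (v + s)

noncomputable def longest {n : ℕ} (χ : Fin n → Fin n → Fin 2) : Fin n → ℕ := fun v =>
  ((Finset.univ.filter (fun u => u < v ∧ χ u v = 1)).attach.sup
    (fun u => longest χ u.1)) + 1
termination_by v => (v : ℕ)
decreasing_by
  have := u.2
  simp only [Finset.mem_filter, Finset.mem_univ, true_and] at this
  exact this.1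

lemma longest_pos {n : ℕ} (χ : Fin n → Fin n → Fin 2) (v : Fin n) : 1 ≤ longest χ v := by
  rw [longest]; omega

lemma longest_lt {n : ℕ} (χ : Fin n → Fin n → Fin 2) {u v : Fin n}
    (h : u < v) (hc : χ u v = 1) : longest χ u < longest χ v := by
  conv_rhs => rw [longest]
  have hm : u ∈ Finset.univ.filter (fun u => u < v ∧ χ u v = 1) := by
    simp [h, hc]
  have := Finset.le_sup (f := fun w : {x // x ∈ Finset.univ.filter (fun u => u < v ∧ χ u v = 1)} => longest χ w.1)
    (Finset.mem_attach _ ⟨u, hm⟩)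
  dsimp only at this
  omega

lemma longest_path {n : ℕ} (χ : Fin n → Fin n → Fin 2) (v : Fin n) :
    ∃ φ : Fin (longest χ v) → Fin n, StrictMono φ ∧ (∀ i, φ i ≤ v) ∧
      (∀ (h : longest χ v - 1 < longest χ v), φ ⟨longest χ v - 1, h⟩ = v) ∧
      ∀ (i : ℕ) (h : i + 1 < longest χ v), χ (φ ⟨i, by omega⟩) (φ ⟨i+1, h⟩) = 1 := by
  suffices key : ∀ (k : ℕ) (v : Fin n), (v : ℕ) < k →
      ∃ φ : Fin (longest χ v) → Fin n, StrictMono φ ∧ (∀ i, φ i ≤ v) ∧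
      (∀ (h : longest χ v - 1 < longest χ v), φ ⟨longest χ v - 1, h⟩ = v) ∧
      ∀ (i : ℕ) (h : i + 1 < longest χ v), χ (φ ⟨i, Nat.lt_of_succ_lt h⟩) (φ ⟨i+1, h⟩) = 1 by
    exact key ((v : ℕ) + 1) v (by omega)
  intro k
  induction k with
  | zero => intro v hv; omega
  | succ k ih =>
    intro v hv
    set s := Finset.univ.filter (fun u => u < v ∧ χ u v = 1) with hs
    rcases eq_or_ne s ∅ with hemp | hne
    · have hlv : longest χ v = 1 := by
        rw [longest]; rw [← hs, hemp]; simp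
      rw [hlv]
      refine ⟨fun _ => v, ?_, fun _ => le_refl v, fun _ => rfl, by omega⟩
      intro i j hij
      exact absurd (Subsingleton.elim i j) (ne_of_lt hij)
    · have hne' : s.Nonempty := Finset.nonempty_iff_ne_empty.2 hne
      obtain ⟨u, hus, hsup⟩ := Finset.exists_mem_eq_sup s.attach
        (Finset.attach_nonempty_iff.2 hne') (fun w => longest χ w.1)
      have humem := Finset.mem_filter.1 (u.2 : u.1 ∈ Finset.univ.filter (fun u => u < v ∧ χ u v = 1))
      have huv : u.1 < v := humem.2.1
      have hcuv : χ u.1 v = 1 := humem.2.2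
      have hlv : longest χ v = longest χ u.1 + 1 := by
        rw [longest, ← hs, hsup]
      set m := longest χ u.1 with hm
      have hm1 : 1 ≤ m := longest_pos χ u.1
      obtain ⟨ψ, hψm, hψle, hψlast, hψcons⟩ := ih u.1 (by omega)
      rw [hlv]
      refine ⟨fun i => if h : (i : ℕ) < m then ψ ⟨i, h⟩ else v, ?_, ?_, ?_, ?_⟩
      · intro i j hij
        by_cases hj : (j : ℕ) < m
        · have hi : (i : ℕ) < m := lt_trans hij hj
          simp only [dif_pos hi, dif_pos hj]
          exact hψm (by exact hij)
        · by_cases hi : (i : ℕ) < m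
          · simp only [dif_pos hi, dif_neg hj]
            exact lt_of_le_of_lt (hψle _) huv
          · exact absurd rfl (by omega : (i:ℕ) ≠ (i:ℕ))
      · intro i
        by_cases hi : (i : ℕ) < m
        · simp only [dif_pos hi]; exact le_trans (hψle _) (le_of_lt huv)
        · simp only [dif_neg hi]
          exact le_refl v
      · intro h
        simp only [Nat.add_sub_cancel, dif_neg (lt_irrefl m)]
      · intro i h
        by_cases hi : i + 1 < m
        · simp only [dif_pos hi, dif_pos (by omega : i < m)]
          exact hψcons i hi
        · have hieq : i + 1 = m := by omega
          have him : i < m := by omega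
          simp only [dif_pos him, dif_neg (by omega : ¬ (i + 1 < m))]
          have : (⟨i, him⟩ : Fin m) = ⟨m - 1, by omega⟩ := by
            simp only [Fin.mk.injEq]; omega
          rw [this, hψlast]
          exact hcuv

lemma fin2_ne_one {x : Fin 2} (h : x ≠ 1) : x = 0 := by
  revert x; decide

lemma chain_lower (f : ℕ → ℕ) (m : ℕ) (h : ∀ i, i + 1 < m → f i < f (i+1)) :
    ∀ i, i < m → f 0 + i ≤ f i := by
  intro i hi
  induction i with
  | zero => omega
  | succ k ihk =>
    have h1 := h k hi
    have h2 := ihk (by omega)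
    omega

lemma div_eq_lt {x y c : ℕ} (hc : 0 < c) (h : x / c = y / c) : y < x + c := by
  by_contra hcon
  push_neg at hcon
  have h1 : (x + c) / c ≤ y / c := Nat.div_le_div_right hcon
  rw [Nat.add_div_right _ hc] at h1
  omega

def bcol (c : ℕ) {n : ℕ} : Fin n → Fin n → Fin 2 := fun u v =>
  if (u : ℕ) / c = (v : ℕ) / c then 0 else 1

lemma bcol_eq_zero {c n : ℕ} {u v : Fin n} :
    bcol c u v = 0 ↔ (u : ℕ) / c = (v : ℕ) / c := by
  unfold bcol
  split_ifs with h
  · exact iff_of_true rfl h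
  · exact iff_of_false (by decide) h

lemma bcol_eq_one {c n : ℕ} {u v : Fin n} :
    bcol c u v = 1 ↔ (u : ℕ) / c ≠ (v : ℕ) / c := by
  unfold bcol
  split_ifs with h
  · exact iff_of_false (by decide) (fun hh => hh h)
  · exact iff_of_true rfl h

lemma bcol_symm {c n : ℕ} (u v : Fin n) : bcol c u v = bcol c v u := by
  unfold bcol
  by_cases h : (u : ℕ) / c = (v : ℕ) / c
  · rw [if_pos h, if_pos h.symm]
  · rw [if_neg h, if_neg (fun hh => h hh.symm)]

lemma ramsey_upper {a b n : ℕ} (H : SimpleGraph (Fin a)) (hb : 1 ≤ b)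
    (hn : (a-1)*(b-1) < n)
    (χ : Fin n → Fin n → Fin 2)
    (hsym : ∀ u v, χ u v = χ v u) :
    ContainsOrd H χ 0 ∨ ContainsOrd (monPath b) χ 1 := by
  by_cases hpath : ∃ v : Fin n, b ≤ longest χ v
  · right
    obtain ⟨v, hv⟩ := hpath
    obtain ⟨φ, hφm, hφle, hφlast, hφcons⟩ := longest_path χ v
    refine ⟨fun i => φ ⟨(i : ℕ), lt_of_lt_of_le i.2 hv⟩, ?_, ?_⟩
    · intro i j hij
      exact hφm (Fin.mk_lt_mk.mpr hij)
    · intro u w huw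
      show χ (φ ⟨(u : ℕ), lt_of_lt_of_le u.2 hv⟩) (φ ⟨(w : ℕ), lt_of_lt_of_le w.2 hv⟩) = 1
      rw [monPath, SimpleGraph.fromRel_adj] at huw
      obtain ⟨hne, hor⟩ := huw
      rcases hor with h1 | h1
      · have hlt : (u : ℕ) + 1 < longest χ v := by
          have := w.2; omega
        have hcc := hφcons (u : ℕ) hlt
        have hw : (⟨(w : ℕ), lt_of_lt_of_le w.2 hv⟩ : Fin (longest χ v)) = ⟨(u:ℕ)+1, hlt⟩ := by
          simp only [Fin.mk.injEq]; omega
        rw [hw]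
        exact hcc
      · have hlt : (w : ℕ) + 1 < longest χ v := by
          have := u.2; omega
        have hcc := hφcons (w : ℕ) hlt
        have hu : (⟨(u : ℕ), lt_of_lt_of_le u.2 hv⟩ : Fin (longest χ v)) = ⟨(w:ℕ)+1, hlt⟩ := by
          simp only [Fin.mk.injEq]; omega
        rw [hsym, hu]
        exact hcc
  · left
    push_neg at hpath
    have hNpos : 0 < n := by omega
    have hb2 : 2 ≤ b := by
      by_contra hb1
      have hb1' : b = 1 := by omega
      have h1 := hpath ⟨0, hNpos⟩
      have h2 := longest_pos χ ⟨0, hNpos⟩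
      omega
    have hmaps : ∀ v ∈ (Finset.univ : Finset (Fin n)), longest χ v - 1 ∈ Finset.range (b-1) := by
      intro v _
      have h1 := hpath v
      have h2 := longest_pos χ v
      rw [Finset.mem_range]
      omega
    obtain ⟨y, _, hy⟩ := Finset.exists_lt_card_fiber_of_mul_lt_card_of_maps_to hmaps
      (by
        rw [Finset.card_range, Finset.card_univ, Fintype.card_fin, Nat.mul_comm]
        omega : (Finset.range (b-1)).card * (a-1) < (Finset.univ : Finset (Fin n)).card)
    have haT : a ≤ (Finset.univ.filter (fun v : Fin n => longest χ v - 1 = y)).card := by omega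
    set T := Finset.univ.filter (fun v : Fin n => longest χ v - 1 = y) with hT
    refine ⟨T.orderEmbOfCardLe haT, (T.orderEmbOfCardLe haT).strictMono, ?_⟩
    intro u v huv
    set e := T.orderEmbOfCardLe haT with he
    have hne : e u ≠ e v := fun h => H.ne_of_adj huv (e.injective h)
    have hmemu := Finset.mem_filter.1 (T.orderEmbOfCardLe_mem haT u)
    have hmemv := Finset.mem_filter.1 (T.orderEmbOfCardLe_mem haT v)
    have hlu : longest χ (e u) = longest χ (e v) := by
      have p1 := longest_pos χ (e u)
      have p2 := longest_pos χ (e v)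
      have q1 : longest χ (e u) - 1 = y := hmemu.2
      have q2 : longest χ (e v) - 1 = y := hmemv.2
      omega
    apply fin2_ne_one
    intro hc
    rcases lt_trichotomy (e u) (e v) with h | h | h
    · exact absurd hlu (ne_of_lt (longest_lt χ h hc))
    · exact hne h
    · have hc2 : χ (e v) (e u) = 1 := by rw [hsym]; exact hc
      exact absurd hlu.symm (ne_of_lt (longest_lt χ h hc2))

lemma ramsey_lower {a b : ℕ} (H : SimpleGraph (Fin a)) (hH : H.Connected) (hb : 1 ≤ b) :
    ∃ χ : Fin ((a-1)*(b-1)) → Fin ((a-1)*(b-1)) → Fin 2, (∀ u v, χ u v = χ v u) ∧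
      ¬ ContainsOrd H χ 0 ∧ ¬ ContainsOrd (monPath b) χ 1 := by
  have ha : 1 ≤ a := Fin.pos_iff_nonempty.2 hH.nonempty
  rcases Nat.eq_zero_or_pos ((a-1)*(b-1)) with hn0 | hnpos
  · refine ⟨fun _ _ => 0, fun _ _ => rfl, ?_, ?_⟩
    · rintro ⟨φ, -, -⟩
      have h := φ ⟨0, ha⟩
      rw [hn0] at h
      exact h.elim0
    · rintro ⟨φ, -, -⟩
      have h := φ ⟨0, hb⟩
      rw [hn0] at h
      exact h.elim0
  · have ha1 : 0 < a - 1 := by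
      rcases Nat.eq_zero_or_pos (a-1) with h | h
      · rw [h] at hnpos; simp at hnpos
      · exact h
    have hb1 : 0 < b - 1 := by
      rcases Nat.eq_zero_or_pos (b-1) with h | h
      · rw [h] at hnpos; simp at hnpos
      · exact h
    refine ⟨bcol (a-1), fun u v => bcol_symm u v, ?_, ?_⟩
    · rintro ⟨φ, hmono, hedge⟩
      have hadj : ∀ u v : Fin a, H.Adj u v → (φ u : ℕ)/(a-1) = (φ v : ℕ)/(a-1) := by
        intro u v huv
        exact bcol_eq_zero.1 (hedge u v huv)
      have hconst : ∀ u v : Fin a, (φ u : ℕ)/(a-1) = (φ v : ℕ)/(a-1) := by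
        intro u v
        obtain ⟨w⟩ := hH.preconnected u v
        induction w with
        | nil => rfl
        | cons h p ihp => exact (hadj _ _ h).trans ihp
      set g : ℕ → ℕ := fun i => if h : i < a then (φ ⟨i,h⟩ : ℕ) else 0 with hg
      have hchain : ∀ i, i + 1 < a → g i < g (i+1) := by
        intro i hi
        rw [hg]
        simp only [dif_pos (by omega : i < a), dif_pos hi]
        exact hmono (Fin.mk_lt_mk.mpr (by omega))
      have h1 := chain_lower g a hchain (a-1) (by omega)
      have h2 : g 0 = (φ ⟨0, by omega⟩ : ℕ) := by
        rw [hg]; dsimp only; rw [dif_pos (by omega : (0:ℕ) < a)]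
      have h3 : g (a-1) = (φ ⟨a-1, by omega⟩ : ℕ) := by
        rw [hg]; dsimp only; rw [dif_pos (by omega : a - 1 < a)]
      have h4 := hconst ⟨0, by omega⟩ ⟨a-1, by omega⟩
      have h5 := div_eq_lt ha1 h4
      omega
    · rintro ⟨φ, hmono, hedge⟩
      set g : ℕ → ℕ := fun i => if h : i < b then (φ ⟨i,h⟩ : ℕ)/(a-1) else 0 with hg
      have hchain : ∀ i, i + 1 < b → g i < g (i+1) := by
        intro i hi
        rw [hg]
        simp only [dif_pos (by omega : i < b), dif_pos hi]
        have hadj : (monPath b).Adj ⟨i, by omega⟩ ⟨i+1, hi⟩ := by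
          rw [monPath, SimpleGraph.fromRel_adj]
          exact ⟨by intro hcon; rw [Fin.mk.injEq] at hcon; omega, Or.inl rfl⟩
        have hne : (φ ⟨i, by omega⟩ : ℕ)/(a-1) ≠ (φ ⟨i+1, hi⟩ : ℕ)/(a-1) :=
          bcol_eq_one.1 (hedge _ _ hadj)
        have hle : (φ ⟨i, by omega⟩ : ℕ)/(a-1) ≤ (φ ⟨i+1, hi⟩ : ℕ)/(a-1) :=
          Nat.div_le_div_right (le_of_lt (hmono (Fin.mk_lt_mk.mpr (by omega))))
        exact lt_of_le_of_ne hle hne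
      have h1 := chain_lower g b hchain (b-1) (by omega)
      have h3 : g (b-1) < b - 1 := by
        rw [hg]
        dsimp only
        rw [dif_pos (by omega : b - 1 < b)]
        exact Nat.div_lt_of_lt_mul (φ ⟨b-1, by omega⟩).2
      omega

lemma contains_up {a n m : ℕ} (H : SimpleGraph (Fin a)) (hnm : n ≤ m) {j : Fin 2}
    {χ : Fin m → Fin m → Fin 2}
    (h : ContainsOrd H (fun u v => χ (Fin.castLE hnm u) (Fin.castLE hnm v)) j) :
    ContainsOrd H χ j := by
  obtain ⟨φ, hm, he⟩ := h
  exact ⟨fun i => Fin.castLE hnm (φ i), fun i j hij => hm hij, he⟩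

theorem stmt6 {a : ℕ} (H : SimpleGraph (Fin a)) (hH : H.Connected) (b : ℕ) (hb : 1 ≤ b) :
    Rord2 H (monPath b) = 1 + (a - 1) * (b - 1) := by
  have hmemN : (1 + (a-1)*(b-1)) ∈ {n | ∀ χ : Fin n → Fin n → Fin 2, (∀ u v, χ u v = χ v u) →
      ContainsOrd H χ 0 ∨ ContainsOrd (monPath b) χ 1} := by
    intro χ hsym
    exact ramsey_upper H hb (by omega) χ hsym
  apply le_antisymm
  · exact Nat.sInf_le hmemN
  · apply le_csInf ⟨_, hmemN⟩
    intro m hm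
    by_contra hcon
    push_neg at hcon
    have hmle : m ≤ (a-1)*(b-1) := by omega
    obtain ⟨χ, hsym, hnH, hnP⟩ := ramsey_lower H hH hb
    have hres := hm (fun u v => χ (Fin.castLE hmle u) (Fin.castLE hmle v)) (fun u v => hsym _ _)
    rcases hres with h | h
    · exact hnH (contains_up H hmle h)
    · exact hnP (contains_up (monPath b) hmle h)
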